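/- For each integer i ≥ 1 let (Z, Yᵢ, Hᵢ, Y_{i-1}) be a pre-wreath structure. Let Y be the union of all the Yᵢ and let H be the subgroup of Sym(Z) generated by the union of all the Hᵢ. Then (Z, Y, H, Y₀) is a pre-wreath structure, and its carrier {Y₀h : h ∈ H} equals the union over i ≥ 1 of the families {Y₀h₁h₂⋯hᵢ : h₁ ∈ H₁, h₂ ∈ H₂, …, hᵢ ∈ Hᵢ}. -/

import Mathlib

/-- A pre-wreath structure `(Z, Y, H, X)`: `H` is a nontrivial subgroup of `Sym(Z)`,
`X ⊆ Y ⊆ Z`, `X` nonempty, every element of `H` fixes every point outside `Y`,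
if `Xh` meets `X` then `h` is the identity on `X`, and every nontrivial `h ∈ H`
moves some set `Xj` (`j ∈ H`). (Images are written with Lean's left action, so the
set `Xh` of the paper is `⇑h '' X`.) -/
def IsPreWreath {Z : Type*} (Y : Set Z) (H : Subgroup (Equiv.Perm Z)) (X : Set Z) : Prop :=
  H ≠ ⊥ ∧
  (∀ h ∈ H, ∀ z : Z, z ∉ Y → h z = z) ∧
  X ⊆ Y ∧
  X.Nonempty ∧
  (∀ h ∈ H, (⇑h '' X ∩ X).Nonempty → ∀ x ∈ X, h x = x) ∧
  (∀ h ∈ H, h ≠ 1 → ∃ j ∈ H, ⇑h '' (⇑j '' X) ≠ ⇑j '' X)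

/-- The carrier `XH = {Xh : h ∈ H}` of a pre-wreath structure. -/
def wreathCarrier {Z : Type*} (H : Subgroup (Equiv.Perm Z)) (X : Set Z) : Set (Set Z) :=
  {A : Set Z | ∃ h ∈ H, A = ⇑h '' X}

/-- The support of a subgroup of `Sym(Z)`: the points moved by some element. -/
def Supp {Z : Type*} (K : Subgroup (Equiv.Perm Z)) : Set Z :=
  {z : Z | ∃ g ∈ K, g z ≠ z}

namespace Stmt11Aux

variable {Z : Type*}

/-- `pprod g i = g i * ⋯ * g 2 * g 1`. -/
def pprod (g : ℕ → Equiv.Perm Z) : ℕ → Equiv.Perm Z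
  | 0 => 1
  | (i + 1) => g (i + 1) * pprod g i

lemma pprod_list (g : ℕ → Equiv.Perm Z) :
    ∀ i, ((List.range' 1 i).reverse.map g).prod = pprod g i
  | 0 => by simp [pprod]
  | (i + 1) => by
      rw [List.range'_concat]
      simp only [List.reverse_append, List.reverse_cons, List.reverse_nil, List.nil_append,
        List.cons_append, List.map_cons, List.prod_cons, pprod, ← pprod_list g i]
      norm_num [Nat.add_comm 1 i]

lemma pprod_congr {g g' : ℕ → Equiv.Perm Z} :
    ∀ {i}, (∀ k, 1 ≤ k → k ≤ i → g k = g' k) → pprod g i = pprod g' i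
  | 0, _ => rfl
  | (i + 1), h => by
      rw [pprod, pprod, h (i + 1) (by omega) le_rfl,
        pprod_congr (fun k hk hk' => h k hk (by omega))]

lemma pprod_pad (g : ℕ → Equiv.Perm Z) (i : ℕ) :
    ∀ t, (∀ k, i < k → k ≤ i + t → g k = 1) → pprod g (i + t) = pprod g i
  | 0, _ => rfl
  | (t + 1), h => by
      have : i + (t + 1) = (i + t) + 1 := rfl
      rw [this, pprod, h (i + t + 1) (by omega) (by omega), one_mul,
        pprod_pad g i t (fun k hk hk' => h k hk (by omega))]

lemma mapsTo_of_fix {h : Equiv.Perm Z} {A : Set Z} (hfix : ∀ z ∉ A, h z = z) :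
    ∀ z ∈ A, h z ∈ A := by
  intro z hz
  by_contra hzA
  have h1 : h (h z) = h z := hfix _ hzA
  have h2 : h z = z := h.injective h1
  exact hzA (by rw [h2]; exact hz)

section Main

variable (Y : ℕ → Set Z) (H : ℕ → Subgroup (Equiv.Perm Z))

/-- The subgroup generated by the `H i` with `1 ≤ i ≤ m`. -/
def Hle (m : ℕ) : Subgroup (Equiv.Perm Z) :=
  Subgroup.closure (⋃ i ∈ {i : ℕ | 1 ≤ i ∧ i ≤ m}, (H i : Set (Equiv.Perm Z)))

/-- The subgroup generated by all the `H i`, `i ≥ 1`. -/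
def bigH : Subgroup (Equiv.Perm Z) :=
  Subgroup.closure (⋃ i ∈ {i : ℕ | 1 ≤ i}, (H i : Set (Equiv.Perm Z)))

variable {Y H}

lemma Hi_le_bigH {i : ℕ} (hi : 1 ≤ i) : H i ≤ bigH H := by
  intro a ha
  exact Subgroup.subset_closure (Set.mem_biUnion hi ha)

lemma Hi_le_Hle {i m : ℕ} (hi : 1 ≤ i) (him : i ≤ m) : H i ≤ Hle H m := by
  intro a ha
  exact Subgroup.subset_closure (Set.mem_biUnion ⟨hi, him⟩ ha)

lemma Hle_mono {m m' : ℕ} (h : m ≤ m') : Hle H m ≤ Hle H m' := by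
  apply Subgroup.closure_mono
  apply Set.biUnion_subset_biUnion_left
  intro i hi
  exact ⟨hi.1, hi.2.trans h⟩

lemma Hle_le_bigH {m : ℕ} : Hle H m ≤ bigH H := by
  apply Subgroup.closure_mono
  apply Set.biUnion_subset_biUnion_left
  intro i hi
  exact hi.1

/-- Extract a word (list of letters, each belonging to some generating subgroup)
from membership in a closure of a union of subgroups. -/
lemma exists_word {ι : Type*} {P : ι → Prop} {K : ι → Subgroup (Equiv.Perm Z)}
    {h : Equiv.Perm Z}
    (hh : h ∈ Subgroup.closure (⋃ i ∈ {i : ι | P i}, (K i : Set (Equiv.Perm Z)))) :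
    ∃ L : List (Equiv.Perm Z), (∀ a ∈ L, ∃ i, P i ∧ a ∈ K i) ∧ L.prod = h := by
  have h1 : h ∈ (Subgroup.closure
      (⋃ i ∈ {i : ι | P i}, (K i : Set (Equiv.Perm Z)))).toSubmonoid := hh
  rw [Subgroup.closure_toSubmonoid] at h1
  obtain ⟨L, hL, hprod⟩ := Submonoid.exists_list_of_mem_closure h1
  refine ⟨L, fun a ha => ?_, hprod⟩
  rcases hL a ha with hmem | hmem
  · simp only [Set.mem_iUnion, SetLike.mem_coe, Set.mem_setOf_eq] at hmem
    obtain ⟨i, hi, hai⟩ := hmem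
    exact ⟨i, hi, hai⟩
  · rw [Set.mem_inv] at hmem
    simp only [Set.mem_iUnion, SetLike.mem_coe, Set.mem_setOf_eq] at hmem
    obtain ⟨i, hi, hai⟩ := hmem
    exact ⟨i, hi, (inv_mem_iff).mp hai⟩

section PW

variable (hpw : ∀ i : ℕ, 1 ≤ i → IsPreWreath (Y i) (H i) (Y (i - 1)))

lemma Ystep (hpw : ∀ i : ℕ, 1 ≤ i → IsPreWreath (Y i) (H i) (Y (i - 1))) (k : ℕ) :
    Y k ⊆ Y (k + 1) := by
  have h := (hpw (k + 1) (by omega)).2.2.1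
  simpa using h

lemma Ymono (hpw : ∀ i : ℕ, 1 ≤ i → IsPreWreath (Y i) (H i) (Y (i - 1)))
    {j i : ℕ} (hji : j ≤ i) : Y j ⊆ Y i := by
  induction i with
  | zero => simp [Nat.le_zero.mp hji]
  | succ n ih =>
      rcases Nat.lt_or_ge j (n + 1) with hlt | hge
      · exact (ih (by omega)).trans (Ystep hpw n)
      · have : j = n + 1 := by omega
        subst this; rfl

lemma Y0ne (hpw : ∀ i : ℕ, 1 ≤ i → IsPreWreath (Y i) (H i) (Y (i - 1))) :
    (Y 0).Nonempty := by
  have h := (hpw 1 le_rfl).2.2.2.1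
  simpa using h

lemma fixout (hpw : ∀ i : ℕ, 1 ≤ i → IsPreWreath (Y i) (H i) (Y (i - 1)))
    {i : ℕ} (hi : 1 ≤ i) {f : Equiv.Perm Z} (hf : f ∈ H i) :
    ∀ z ∉ Y i, f z = z :=
  (hpw i hi).2.1 f hf

lemma idOn (hpw : ∀ i : ℕ, 1 ≤ i → IsPreWreath (Y i) (H i) (Y (i - 1)))
    {i : ℕ} (hi : 1 ≤ i) {f : Equiv.Perm Z} (hf : f ∈ H i)
    (hcap : (⇑f '' Y (i - 1) ∩ Y (i - 1)).Nonempty) :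
    ∀ x ∈ Y (i - 1), f x = x :=
  (hpw i hi).2.2.2.2.1 f hf hcap

lemma moves (hpw : ∀ i : ℕ, 1 ≤ i → IsPreWreath (Y i) (H i) (Y (i - 1)))
    {i : ℕ} (hi : 1 ≤ i) {f : Equiv.Perm Z} (hf : f ∈ H i) (hne : f ≠ 1) :
    ∃ j ∈ H i, ⇑f '' (⇑j '' Y (i - 1)) ≠ ⇑j '' Y (i - 1) :=
  (hpw i hi).2.2.2.2.2 f hf hne

/-- An element of `H j` (`j ≤ m`) preserves `Y m`. -/
lemma presY (hpw : ∀ i : ℕ, 1 ≤ i → IsPreWreath (Y i) (H i) (Y (i - 1)))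
    {j m : ℕ} (hj : 1 ≤ j) (hjm : j ≤ m) {f : Equiv.Perm Z} (hf : f ∈ H j)
    {x : Z} (hx : x ∈ Y m) : f x ∈ Y m := by
  by_cases hxj : x ∈ Y j
  · exact Ymono hpw hjm (mapsTo_of_fix (fixout hpw hj hf) x hxj)
  · rw [fixout hpw hj hf x hxj]; exact hx

/-- Members of `Hle m` fix every point outside `Y m`. -/
lemma fixout_Hle (hpw : ∀ i : ℕ, 1 ≤ i → IsPreWreath (Y i) (H i) (Y (i - 1)))
    {m : ℕ} {h : Equiv.Perm Z} (hh : h ∈ Hle H m) :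
    ∀ z ∉ Y m, h z = z := by
  intro z hz
  obtain ⟨L, hL, rfl⟩ := exists_word hh
  clear hh
  induction L with
  | nil => simp
  | cons a L ih =>
      obtain ⟨i, ⟨hi1, him⟩, hai⟩ := hL a (by simp)
      have hz' : L.prod z = z := ih (fun b hb => hL b (by simp [hb]))
      rw [List.prod_cons, Equiv.Perm.mul_apply, hz']
      exact fixout hpw hi1 hai z (fun hmem => hz (Ymono hpw him hmem))

lemma presY_Hle (hpw : ∀ i : ℕ, 1 ≤ i → IsPreWreath (Y i) (H i) (Y (i - 1)))
    {m : ℕ} {h : Equiv.Perm Z} (hh : h ∈ Hle H m) {z : Z} (hz : z ∈ Y m) :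
    h z ∈ Y m :=
  mapsTo_of_fix (fixout_Hle hpw hh) z hz

/-- `pprod g i` maps `Y 0` into `Y i`. -/
lemma pprod_mapsY (hpw : ∀ i : ℕ, 1 ≤ i → IsPreWreath (Y i) (H i) (Y (i - 1))) :
    ∀ i (g : ℕ → Equiv.Perm Z), (∀ k, 1 ≤ k → k ≤ i → g k ∈ H k) →
      ∀ x ∈ Y 0, pprod g i x ∈ Y i := by
  intro i
  induction i with
  | zero => intro g _ x hx; simpa [pprod]
  | succ n ih =>
      intro g hg x hx
      have h1 : pprod g n x ∈ Y n := ih g (fun k hk hk' => hg k hk (by omega)) x hx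
      have h2 : pprod g n x ∈ Y (n + 1) := Ystep hpw n h1
      rw [pprod, Equiv.Perm.mul_apply]
      exact mapsTo_of_fix (fixout hpw (by omega) (hg (n + 1) (by omega) le_rfl)) _ h2

/-- Key lemma: applying a single generator to a product-image of a point
of `Y 0` gives a product-image again (pointwise on `Y 0`). -/
lemma key (hpw : ∀ i : ℕ, 1 ≤ i → IsPreWreath (Y i) (H i) (Y (i - 1))) :
    ∀ i, 1 ≤ i → ∀ g : ℕ → Equiv.Perm Z, (∀ k, 1 ≤ k → k ≤ i → g k ∈ H k) →
      ∀ j, 1 ≤ j → ∀ f ∈ H j,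
      ∃ i', 1 ≤ i' ∧ ∃ g' : ℕ → Equiv.Perm Z, (∀ k, 1 ≤ k → k ≤ i' → g' k ∈ H k) ∧
        ∀ x ∈ Y 0, f (pprod g i x) = pprod g' i' x := by
  intro i
  induction i using Nat.strong_induction_on with
  | _ i IH =>
      intro hi g hg j hj f hf
      rcases Nat.lt_or_ge i j with hij | hij
      · -- pad with identities up to level j
        obtain ⟨t, rfl⟩ : ∃ t, j = i + t + 1 := ⟨j - i - 1, by omega⟩
        set g' : ℕ → Equiv.Perm Z :=
          fun k => if k ≤ i then g k else if k = i + t + 1 then f else 1 with hg'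
        refine ⟨i + t + 1, by omega, g', ?_, ?_⟩
        · intro k hk hk'
          by_cases h1 : k ≤ i
          · simpa [hg', h1] using hg k hk h1
          · by_cases h2 : k = i + t + 1
            · subst h2
              simp only [hg', h1, if_false, if_pos rfl]
              exact hf
            · simp only [hg', h1, if_false, h2, if_false]; exact one_mem _
        · intro x _
          have e1 : pprod g' i = pprod g i :=
            pprod_congr (fun k _ hk => by simp [hg', hk])
          have e2 : pprod g' (i + t) = pprod g' i :=
            pprod_pad g' i t (fun k hk hk' => by
              have h1 : ¬ k ≤ i := by omega
              have h2 : ¬ k = i + t + 1 := by omega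
              simp [hg', h1, h2])
          have : i + t + 1 = (i + t) + 1 := rfl
          rw [this, pprod, e2, e1]
          simp only [Equiv.Perm.mul_apply]
          congr 1
          have hni : ¬ (i + t + 1 ≤ i) := by omega
          simp [hg', hni]
      · -- j ≤ i ; write i = n + 1
        obtain ⟨n, rfl⟩ : ∃ n, i = n + 1 := ⟨i - 1, by omega⟩
        rcases Nat.lt_or_ge n (1) with hn0 | hn1
        · -- n = 0, so i = 1 = j
          interval_cases n
          have hj1 : j = 1 := by omega
          subst hj1
          refine ⟨1, le_rfl, Function.update g 1 (f * g 1), ?_, ?_⟩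
          · intro k hk hk'
            have : k = 1 := by omega
            subst this
            simp only [Function.update_self]
            exact mul_mem hf (hg 1 le_rfl le_rfl)
          · intro x _
            simp [pprod, Function.update_self, Equiv.Perm.mul_apply]
        · rcases Nat.lt_or_ge n (j) with hjn | hjn
          · -- j = n + 1
            have hj' : j = n + 1 := by omega
            subst hj'
            refine ⟨n + 1, by omega, Function.update g (n + 1) (f * g (n + 1)), ?_, ?_⟩
            · intro k hk hk'
              by_cases hkn : k = n + 1
              · subst hkn
                simp only [Function.update_self]
                exact mul_mem hf (hg (n + 1) hk hk')
              · rw [Function.update_of_ne hkn]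
                exact hg k hk hk'
            · intro x _
              have e1 : pprod (Function.update g (n + 1) (f * g (n + 1))) n = pprod g n :=
                pprod_congr (fun k _ hk => by rw [Function.update_of_ne (by omega)])
              rw [pprod, pprod, e1, Function.update_self]
              simp [Equiv.Perm.mul_apply]
          · -- j ≤ n
            by_cases hcap : ((⇑(g (n + 1)) '' Y n) ∩ Y n).Nonempty
            · -- g (n+1) is the identity on Y n
              have hid : ∀ x ∈ Y n, g (n + 1) x = x :=
                idOn hpw (i := n + 1) (by omega) (hg (n + 1) (by omega) le_rfl) hcap
              obtain ⟨i', hi', g', hg', he⟩ :=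
                IH n (by omega) (by omega) g (fun k hk hk' => hg k hk (by omega)) j hj f hf
              refine ⟨i', hi', g', hg', ?_⟩
              intro x hx
              have hv : pprod g n x ∈ Y n :=
                pprod_mapsY hpw n g (fun k hk hk' => hg k hk (by omega)) x hx
              rw [pprod, Equiv.Perm.mul_apply, hid _ hv]
              exact he x hx
            · -- the image block is disjoint from Y n, so f fixes it
              refine ⟨n + 1, by omega, g, hg, ?_⟩
              intro x hx
              have hv : pprod g n x ∈ Y n :=
                pprod_mapsY hpw n g (fun k hk hk' => hg k hk (by omega)) x hx
              have hw : pprod g (n + 1) x ∉ Y n := by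
                intro hmem
                exact hcap ⟨pprod g (n + 1) x,
                  ⟨pprod g n x, hv, by rw [pprod]; rfl⟩, hmem⟩
              have hwj : pprod g (n + 1) x ∉ Y j :=
                fun hc => hw (Ymono hpw hjn hc)
              exact fixout hpw hj hf _ hwj

/-- Normal-form lemma: every element of the big group agrees on `Y 0` with a
product `g i * ⋯ * g 1`, `g k ∈ H k`. -/
lemma nf (hpw : ∀ i : ℕ, 1 ≤ i → IsPreWreath (Y i) (H i) (Y (i - 1)))
    {h : Equiv.Perm Z} (hh : h ∈ bigH H) :
    ∃ i, 1 ≤ i ∧ ∃ g : ℕ → Equiv.Perm Z, (∀ k, 1 ≤ k → k ≤ i → g k ∈ H k) ∧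
      ∀ x ∈ Y 0, h x = pprod g i x := by
  obtain ⟨L, hL, rfl⟩ := exists_word hh
  clear hh
  induction L with
  | nil =>
      refine ⟨1, le_rfl, fun _ => 1, fun k _ _ => one_mem _, ?_⟩
      intro x _
      simp [pprod]
  | cons a L ih =>
      obtain ⟨i, hi, g, hg, he⟩ := ih (fun b hb => hL b (by simp [hb]))
      obtain ⟨j, hj, haj⟩ := hL a (by simp)
      obtain ⟨i', hi', g', hg', he'⟩ := key hpw i hi g hg j hj a haj
      refine ⟨i', hi', g', hg', ?_⟩
      intro x hx
      rw [List.prod_cons, Equiv.Perm.mul_apply, he x hx]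
      exact he' x hx

/-- If a product maps some point of `Y 0` into `Y 0` then it is the identity on `Y 0`. -/
lemma pprod_idY0 (hpw : ∀ i : ℕ, 1 ≤ i → IsPreWreath (Y i) (H i) (Y (i - 1))) :
    ∀ i (g : ℕ → Equiv.Perm Z), (∀ k, 1 ≤ k → k ≤ i → g k ∈ H k) →
      ((⇑(pprod g i) '' Y 0) ∩ Y 0).Nonempty → ∀ x ∈ Y 0, pprod g i x = x := by
  intro i
  induction i with
  | zero => intro g _ _ x _; simp [pprod]
  | succ n ih =>
      intro g hg hcap x hx
      obtain ⟨y, ⟨x₀, hx₀, hyx₀⟩, hy0⟩ := hcap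
      have hv : pprod g n x₀ ∈ Y n :=
        pprod_mapsY hpw n g (fun k hk hk' => hg k hk (by omega)) x₀ hx₀
      have hc : ((⇑(g (n + 1)) '' Y n) ∩ Y n).Nonempty := by
        refine ⟨y, ⟨pprod g n x₀, hv, ?_⟩, Ymono hpw (Nat.zero_le n) hy0⟩
        rw [← hyx₀, pprod]; rfl
      have hid : ∀ z ∈ Y n, g (n + 1) z = z :=
        idOn hpw (i := n + 1) (by omega) (hg (n + 1) (by omega) le_rfl) hc
      have hstep : ∀ z ∈ Y 0, pprod g (n + 1) z = pprod g n z := by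
        intro z hz
        have : pprod g n z ∈ Y n :=
          pprod_mapsY hpw n g (fun k hk hk' => hg k hk (by omega)) z hz
        rw [pprod, Equiv.Perm.mul_apply, hid _ this]
      have hcap' : ((⇑(pprod g n) '' Y 0) ∩ Y 0).Nonempty := by
        refine ⟨y, ⟨x₀, hx₀, ?_⟩, hy0⟩
        rw [← hyx₀, ← hstep x₀ hx₀]
      have hidn := ih g (fun k hk hk' => hg k hk (by omega)) hcap'
      rw [hstep x hx, hidn x hx]

/-- Property (ii) for the big structure. -/
lemma prop5 (hpw : ∀ i : ℕ, 1 ≤ i → IsPreWreath (Y i) (H i) (Y (i - 1)))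
    {h : Equiv.Perm Z} (hh : h ∈ bigH H)
    (hcap : ((⇑h '' Y 0) ∩ Y 0).Nonempty) : ∀ x ∈ Y 0, h x = x := by
  obtain ⟨i, hi, g, hg, he⟩ := nf hpw hh
  have himg : ⇑h '' Y 0 = ⇑(pprod g i) '' Y 0 := Set.image_congr he
  have := pprod_idY0 hpw i g hg (by rwa [himg] at hcap)
  intro x hx
  rw [he x hx, this x hx]

/-- The union of all translates of `Y 0` under the big group. -/
def U (Y : ℕ → Set Z) (H : ℕ → Subgroup (Equiv.Perm Z)) : Set Z :=
  {z : Z | ∃ j ∈ bigH H, z ∈ ⇑j '' Y 0}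

lemma U_fwd {c : Equiv.Perm Z} (hc : c ∈ bigH H) {z : Z} (hz : z ∈ U Y H) :
    c z ∈ U Y H := by
  obtain ⟨j, hj, x, hx, rfl⟩ := hz
  exact ⟨c * j, mul_mem hc hj, x, hx, rfl⟩

lemma U_mem {c : Equiv.Perm Z} (hc : c ∈ bigH H) {x : Z} (hx : x ∈ Y 0) :
    c x ∈ U Y H := ⟨c, hc, x, hx, rfl⟩

/-- The crucial block-decomposition invariant for words with letters of level `≤ m + 1`. -/
lemma blockform (hpw : ∀ i : ℕ, 1 ≤ i → IsPreWreath (Y i) (H i) (Y (i - 1)))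
    (m : ℕ) (L : List (Equiv.Perm Z))
    (hL : ∀ a ∈ L, ∃ j, 1 ≤ j ∧ j ≤ m + 1 ∧ a ∈ H j) :
    ∃ p ∈ H (m + 1),
      (∀ c ∈ H (m + 1), ∃ w ∈ Hle H m, ∀ z ∈ Y m, L.prod (c z) = p (c (w z))) ∧
      (∀ z : Z, (∀ c ∈ H (m + 1), ∀ x ∈ Y m, z ≠ c x) → L.prod z = p z) := by
  have hidOn : ∀ {q : Equiv.Perm Z}, q ∈ H (m + 1) →
      ((⇑q '' Y m) ∩ Y m).Nonempty → ∀ x ∈ Y m, q x = x :=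
    fun hq hcap => idOn hpw (i := m + 1) (by omega) hq hcap
  induction L with
  | nil =>
      refine ⟨1, one_mem _, fun c hc => ⟨1, one_mem _, fun z hz => by simp⟩,
        fun z _ => by simp⟩
  | cons a L ih =>
      obtain ⟨p, hp, hblock, hnon⟩ := ih (fun b hb => hL b (by simp [hb]))
      obtain ⟨j, hj1, hjm, haj⟩ := hL a (by simp)
      rcases Nat.lt_or_ge j (m + 1) with hjlt | hjge
      · -- low-level letter, j ≤ m
        have hjm' : j ≤ m := by omega
        refine ⟨p, hp, ?_, ?_⟩
        · intro c hc
          obtain ⟨w, hw, hwe⟩ := hblock c hc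
          by_cases hcap : ((⇑(p * c) '' Y m) ∩ Y m).Nonempty
          · -- the block p*c''Y m equals Y m pointwise
            have hd : ∀ x ∈ Y m, (p * c) x = x := hidOn (mul_mem hp hc) hcap
            refine ⟨a * w, mul_mem (Hi_le_Hle hj1 hjm' haj) hw, ?_⟩
            intro z hz
            have hwz : w z ∈ Y m := presY_Hle hpw hw hz
            have hawz : a (w z) ∈ Y m := presY hpw hj1 hjm' haj hwz
            rw [List.prod_cons, Equiv.Perm.mul_apply, hwe z hz]
            have e1 : p (c (w z)) = w z := hd (w z) hwz
            have e2 : p (c ((a * w) z)) = (a * w) z := hd _ (by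
              simpa [Equiv.Perm.mul_apply] using hawz)
            rw [e1, e2]
            rfl
          · -- the block is disjoint from Y m, so a fixes it
            refine ⟨w, hw, ?_⟩
            intro z hz
            have hwz : w z ∈ Y m := presY_Hle hpw hw hz
            have hq : p (c (w z)) ∉ Y m := by
              intro hmem
              exact hcap ⟨p (c (w z)), ⟨w z, hwz, rfl⟩, hmem⟩
            have hqj : p (c (w z)) ∉ Y j := fun hcj => hq (Ymono hpw hjm' hcj)
            rw [List.prod_cons, Equiv.Perm.mul_apply, hwe z hz,
              fixout hpw hj1 haj _ hqj]
        · intro z hzn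
          have hpz : p z ∉ Y j := by
            intro hcj
            exact hzn p⁻¹ (inv_mem hp) (p z) (Ymono hpw hjm' hcj) (by simp)
          rw [List.prod_cons, Equiv.Perm.mul_apply, hnon z hzn,
            fixout hpw hj1 haj _ hpz]
      · -- top-level letter, j = m + 1
        have hje : j = m + 1 := by omega
        subst hje
        refine ⟨a * p, mul_mem haj hp, ?_, ?_⟩
        · intro c hc
          obtain ⟨w, hw, hwe⟩ := hblock c hc
          exact ⟨w, hw, fun z hz => by
            rw [List.prod_cons, Equiv.Perm.mul_apply, hwe z hz]; rfl⟩
        · intro z hzn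
          rw [List.prod_cons, Equiv.Perm.mul_apply, hnon z hzn]
          rfl

/-- An element of `Hle m` that fixes `U` pointwise is trivial. -/
lemma fixU_trivial (hpw : ∀ i : ℕ, 1 ≤ i → IsPreWreath (Y i) (H i) (Y (i - 1))) :
    ∀ m : ℕ, ∀ h ∈ Hle H m, (∀ z ∈ U Y H, h z = z) → h = 1 := by
  intro m
  induction m with
  | zero =>
      intro h hh _
      have he : (⋃ i ∈ {i : ℕ | 1 ≤ i ∧ i ≤ 0}, (H i : Set (Equiv.Perm Z))) = ∅ := by
        ext x
        simp only [Set.mem_iUnion, Set.mem_setOf_eq, Set.mem_empty_iff_false, iff_false]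
        rintro ⟨i, ⟨hi1, hi0⟩, _⟩
        omega
      rw [Hle, he, Subgroup.closure_empty, Subgroup.mem_bot] at hh
      exact hh
  | succ m IH =>
      intro h hh hU
      have hidOn : ∀ {q : Equiv.Perm Z}, q ∈ H (m + 1) →
          ((⇑q '' Y m) ∩ Y m).Nonempty → ∀ x ∈ Y m, q x = x :=
        fun hq hcap => idOn hpw (i := m + 1) (by omega) hq hcap
      obtain ⟨L, hL, rfl⟩ := exists_word hh
      obtain ⟨p, hp, hblock, hnon⟩ := blockform hpw m L
        (fun a ha => by
          obtain ⟨i, ⟨hi1, him⟩, hai⟩ := hL a ha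
          exact ⟨i, hi1, him, hai⟩)
      obtain ⟨y₀, hy₀⟩ := Y0ne hpw
      have hy₀m : y₀ ∈ Y m := Ymono hpw (Nat.zero_le m) hy₀
      -- Step A: for each c ∈ H (m+1), the conjugate of p by c is the identity on Y m
      have hA : ∀ c ∈ H (m + 1), ∀ x ∈ Y m, p (c x) = c x := by
        intro c hc
        obtain ⟨w, hw, hwe⟩ := hblock c hc
        have hcbig : c ∈ bigH H := Hi_le_bigH (by omega) hc
        have h1 : L.prod (c y₀) = c y₀ := hU _ (U_mem hcbig hy₀)
        have h2 : p (c (w y₀)) = c y₀ := by rw [← hwe y₀ hy₀m, h1]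
        have hwy : w y₀ ∈ Y m := presY_Hle hpw hw hy₀m
        set q : Equiv.Perm Z := c⁻¹ * p * c with hq
        have hqmem : q ∈ H (m + 1) := mul_mem (mul_mem (inv_mem hc) hp) hc
        have hqy : q (w y₀) = y₀ := by
          simp only [hq, Equiv.Perm.mul_apply]
          rw [h2]
          simp
        have hcap : ((⇑q '' Y m) ∩ Y m).Nonempty :=
          ⟨y₀, ⟨w y₀, hwy, hqy⟩, hy₀m⟩
        have hqid := hidOn hqmem hcap
        intro x hx
        have := hqid x hx
        simp only [hq, Equiv.Perm.mul_apply] at this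
        calc p (c x) = c (c⁻¹ (p (c x))) := by simp
          _ = c x := by rw [this]
      -- Step B: p = 1
      have hp1 : p = 1 := by
        by_contra hpne
        obtain ⟨c, hc, hmoves⟩ := moves hpw (i := m + 1) (by omega) hp hpne
        apply hmoves
        have : (m + 1 - 1) = m := by omega
        rw [this, ← Set.image_comp]
        exact Set.image_congr (fun x hx => hA c hc x hx)
      subst hp1
      -- Step C: h fixes each translate c '' Y m pointwise
      have hC : ∀ c ∈ H (m + 1), ∀ z ∈ Y m, L.prod (c z) = c z := by
        intro c hc
        obtain ⟨w, hw, hwe⟩ := hblock c hc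
        have hcbig : c ∈ bigH H := Hi_le_bigH (by omega) hc
        have hwU : ∀ z ∈ U Y H, w z = z := by
          intro z hz
          by_cases hzm : z ∈ Y m
          · have h1 : L.prod (c z) = c z := hU _ (U_fwd hcbig hz)
            have h2 : L.prod (c z) = c (w z) := by
              rw [hwe z hzm]; simp
            exact c.injective (by rw [← h2, h1])
          · exact fixout_Hle hpw hw z hzm
        have hw1 : w = 1 := IH w hw hwU
        subst hw1
        intro z hz
        rw [hwe z hz]
        simp
      -- Step D: conclude
      ext z
      simp only [Equiv.Perm.one_apply]
      by_cases hz : ∃ c ∈ H (m + 1), ∃ x ∈ Y m, z = c x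
      · obtain ⟨c, hc, x, hx, rfl⟩ := hz
        exact hC c hc x hx
      · push_neg at hz
        have := hnon z (fun c hc x hx => hz c hc x hx)
        simpa using this

/-- Property (iii) for the big structure. -/
lemma prop6 (hpw : ∀ i : ℕ, 1 ≤ i → IsPreWreath (Y i) (H i) (Y (i - 1)))
    {h : Equiv.Perm Z} (hh : h ∈ bigH H) (hne : h ≠ 1) :
    ∃ j ∈ bigH H, ⇑h '' (⇑j '' Y 0) ≠ ⇑j '' Y 0 := by
  by_contra hcon
  push_neg at hcon
  -- h fixes U pointwise
  have hfixU : ∀ z ∈ U Y H, h z = z := by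
    rintro z ⟨j, hj, y, hy, rfl⟩
    have hj' : j⁻¹ * h * j ∈ bigH H := mul_mem (mul_mem (inv_mem hj) hh) hj
    have himg : ⇑(j⁻¹ * h * j) '' Y 0 = Y 0 := by
      have : (⇑(j⁻¹ * h * j)) = (⇑j⁻¹ ∘ ⇑h ∘ ⇑j) := by
        funext x; simp [Equiv.Perm.mul_apply]
      rw [this, Set.image_comp, Set.image_comp, hcon j hj]
      ext x
      constructor
      · rintro ⟨y', ⟨y'', hy'', rfl⟩, rfl⟩
        simpa using hy''
      · intro hx
        exact ⟨j x, ⟨x, hx, rfl⟩, by simp⟩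
    have hcap : ((⇑(j⁻¹ * h * j) '' Y 0) ∩ Y 0).Nonempty := by
      rw [himg]
      exact ⟨y, hy, hy⟩
    have := prop5 hpw hj' hcap y hy
    simp only [Equiv.Perm.mul_apply] at this
    calc h (j y) = j (j⁻¹ (h (j y))) := by simp
      _ = j y := by rw [this]
  -- h lies in some Hle m
  obtain ⟨L, hL, rfl⟩ := exists_word hh
  have hm : ∃ m, L.prod ∈ Hle H m := by
    clear hfixU hne hcon hh
    induction L with
    | nil => exact ⟨0, by simp⟩
    | cons a L ih =>
        obtain ⟨m, hmem⟩ := ih (fun b hb => hL b (by simp [hb]))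
        obtain ⟨i, hi1, hai⟩ := hL a (by simp)
        refine ⟨max i m, ?_⟩
        rw [List.prod_cons]
        exact mul_mem (Hi_le_Hle hi1 (le_max_left i m) hai)
          (Hle_mono (le_max_right i m) hmem)
  obtain ⟨m, hmem⟩ := hm
  exact hne (fixU_trivial hpw m _ hmem hfixU)

end PW

end Main

end Stmt11Aux

/-- Given pre-wreath structures `(Z, Yᵢ, Hᵢ, Y_{i-1})` for all `i ≥ 1`,
let `Y` be the union of the `Yᵢ` and `H` the subgroup generated by all the `Hᵢ`.  Then
`(Z, Y, H, Y₀)` is a pre-wreath structure, and its carrier is the union over `i ≥ 1` of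
the families `{Y₀h₁h₂⋯hᵢ : hₖ ∈ Hₖ}` (apply `h₁` first, …, `hᵢ` last; the composite is
the product `hᵢ ⋯ h₂ h₁` of permutations acting on the left). -/
theorem stmt11 {Z : Type*} (Y : ℕ → Set Z) (H : ℕ → Subgroup (Equiv.Perm Z))
    (hpw : ∀ i : ℕ, 1 ≤ i → IsPreWreath (Y i) (H i) (Y (i - 1))) :
    IsPreWreath (⋃ i ∈ {i : ℕ | 1 ≤ i}, Y i)
      (Subgroup.closure (⋃ i ∈ {i : ℕ | 1 ≤ i}, (H i : Set (Equiv.Perm Z)))) (Y 0) ∧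
    wreathCarrier
        (Subgroup.closure (⋃ i ∈ {i : ℕ | 1 ≤ i}, (H i : Set (Equiv.Perm Z)))) (Y 0)
      = {A : Set Z | ∃ i : ℕ, 1 ≤ i ∧ ∃ g : ℕ → Equiv.Perm Z,
          (∀ k : ℕ, 1 ≤ k → k ≤ i → g k ∈ H k) ∧
          A = ⇑(((List.range' 1 i).reverse.map g).prod) '' Y 0} := by
  classical
  have hbig : Subgroup.closure (⋃ i ∈ {i : ℕ | 1 ≤ i}, (H i : Set (Equiv.Perm Z)))
      = Stmt11Aux.bigH H := rfl
  constructor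
  · refine ⟨?_, ?_, ?_, ?_, ?_, ?_⟩
    · -- nontriviality
      rw [hbig]
      intro hbot
      have h1 : H 1 ≠ ⊥ := (hpw 1 le_rfl).1
      rw [Subgroup.ne_bot_iff_exists_ne_one] at h1
      obtain ⟨⟨f, hf⟩, hfne⟩ := h1
      have : f ∈ Stmt11Aux.bigH H := Stmt11Aux.Hi_le_bigH le_rfl hf
      rw [hbot, Subgroup.mem_bot] at this
      exact hfne (by simpa [Subgroup.mk_eq_one] using this)
    · -- fixes points outside the union
      intro h hh z hz
      rw [hbig] at hh
      obtain ⟨L, hL, rfl⟩ := Stmt11Aux.exists_word hh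
      clear hh
      induction L with
      | nil => simp
      | cons a L ih =>
          obtain ⟨i, hi1, hai⟩ := hL a (by simp)
          have hz' : L.prod z = z := ih (fun b hb => hL b (by simp [hb]))
          rw [List.prod_cons, Equiv.Perm.mul_apply, hz']
          refine Stmt11Aux.fixout hpw hi1 hai z (fun hmem => hz ?_)
          exact Set.mem_biUnion (show (1:ℕ) ≤ i from hi1) hmem
    · -- Y 0 ⊆ union
      intro x hx
      have hx1 : x ∈ Y 1 := Stmt11Aux.Ymono hpw (by omega) hx
      exact Set.mem_biUnion (le_rfl : (1:ℕ) ≤ 1) hx1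
    · exact Stmt11Aux.Y0ne hpw
    · -- property (ii)
      intro h hh hcap x hx
      rw [hbig] at hh
      exact Stmt11Aux.prop5 hpw hh hcap x hx
    · -- property (iii)
      intro h hh hne
      rw [hbig] at hh
      obtain ⟨j, hj, hne'⟩ := Stmt11Aux.prop6 hpw hh hne
      exact ⟨j, by rw [hbig]; exact hj, hne'⟩
  · -- the carrier description
    ext A
    constructor
    · rintro ⟨h, hh, rfl⟩
      rw [hbig] at hh
      obtain ⟨i, hi, g, hg, he⟩ := Stmt11Aux.nf hpw hh
      refine ⟨i, hi, g, hg, ?_⟩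
      rw [Stmt11Aux.pprod_list]
      exact Set.image_congr he
    · rintro ⟨i, hi, g, hg, rfl⟩
      refine ⟨((List.range' 1 i).reverse.map g).prod, ?_, rfl⟩
      rw [hbig]
      apply list_prod_mem
      intro x hx
      simp only [List.mem_map, List.mem_reverse, List.mem_range'_1] at hx
      obtain ⟨k, ⟨hk1, hk2⟩, rfl⟩ := hx
      exact Stmt11Aux.Hi_le_bigH hk1 (hg k hk1 (by omega))
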